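/- Suppose ρ ≤ 1/2, and for b > 0 let r(b) denote the unique minimizer of a ↦ c(a;b) over [0,∞). Then r is monotone increasing on the interval (0, b^e) (follow-the-crowd behaviour) and monotone decreasing on the interval (b^e, b^e/(1−ρ)²) (avoid-the-crowd behaviour). -/

import Mathlib

/-- Expected waiting time `W(a; b)` of a tagged customer bidding `a` when all
other customers bid `b`, in the homogeneous accumulating-priority M/G/1 queue
with utilization `ρ` and mean residual service time `W0`. -/
noncomputable def waitW (ρ W0 b a : ℝ) : ℝ :=
  if a ≤ b then W0 / (1 - ρ) * b / ((1 - ρ) * b + ρ * a)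
  else W0 / (1 - ρ) * ((1 - ρ) * a + ρ * b) / a

/-- Cost `c(a;b) = C·W(a;b) + a` of a tagged customer bidding `a` against crowd bid `b`. -/
noncomputable def costC (ρ W0 C b a : ℝ) : ℝ := C * waitW ρ W0 b a + a

/-- The equilibrium bid `b^e = CρW₀/(1-ρ)`. -/
noncomputable def eqBid (ρ W0 C : ℝ) : ℝ := C * ρ * W0 / (1 - ρ)

noncomputable def fK (ρ K b a : ℝ) : ℝ :=
  if a ≤ b then K * b / ((1 - ρ) * b + ρ * a) + a
  else K * ((1 - ρ) * a + ρ * b) / a + a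

lemma costC_eq (ρ W0 C b a : ℝ) : costC ρ W0 C b a = fK ρ (C * W0 / (1 - ρ)) b a := by
  unfold costC waitW fK
  split_ifs <;> ring

lemma minA (ρ K b : ℝ) (hρ0 : 0 < ρ) (hρ1 : ρ < 1) (hK : 0 < K)
    (hb : 0 < b) (hbe : b < K * ρ) (a : ℝ) (ha : 0 ≤ a) :
    fK ρ K b (Real.sqrt (K * ρ * b)) ≤ fK ρ K b a := by
  have h1ρ : (0:ℝ) < 1 - ρ := by linarith
  set s := Real.sqrt (K * ρ * b) with hs_def
  have hKρb : 0 < K * ρ * b := by positivity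
  have hs2 : s ^ 2 = K * ρ * b := Real.sq_sqrt hKρb.le
  have hs : 0 < s := Real.sqrt_pos.2 hKρb
  have hbs : b < s := by
    refine lt_of_pow_lt_pow_left₀ 2 hs.le ?_
    nlinarith
  have hs3 : s ^ 3 = K * ρ * b * s := by linear_combination s * hs2
  have h2 : 0 ≤ K * ρ + b - 2 * s := by nlinarith [sq_nonneg (s - b)]
  unfold fK
  rw [if_neg (not_le.2 hbs)]
  split_ifs with h
  · -- a ≤ b
    have hD : 0 < (1 - ρ) * b + ρ * a := by nlinarith
    have hKρD : (1 - ρ) * b + ρ * a ≤ b := by nlinarith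
    rw [div_add' _ _ _ hs.ne', div_add' _ _ _ hD.ne', div_le_div_iff₀ hs hD]
    have h1 : 0 ≤ (b - a) * (K * ρ - ((1 - ρ) * b + ρ * a)) := by
      apply mul_nonneg <;> nlinarith
    nlinarith [mul_nonneg hs.le h1, mul_nonneg (mul_nonneg hs.le hD.le) h2, hs2, hs3]
  · -- a > b
    have ha0 : 0 < a := lt_trans hb (not_le.1 h)
    rw [div_add' _ _ _ hs.ne', div_add' _ _ _ ha0.ne', div_le_div_iff₀ hs ha0]
    nlinarith [mul_nonneg hs.le (sq_nonneg (a - s)), hs2, hs3]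


lemma minB (ρ K b : ℝ) (hρ0 : 0 < ρ) (hρ1 : ρ < 1) (hK : 0 < K)
    (hb : K * ρ < b) (hbu : (1 - ρ) ^ 2 * b < K * ρ) (a : ℝ) (ha : 0 ≤ a) :
    fK ρ K b ((Real.sqrt (K * ρ * b) - (1 - ρ) * b) / ρ) ≤ fK ρ K b a := by
  have h1ρ : (0:ℝ) < 1 - ρ := by linarith
  have hb0 : 0 < b := lt_trans (by positivity) hb
  set s := Real.sqrt (K * ρ * b) with hs_def
  have hKρb : 0 < K * ρ * b := by positivity
  have hs2 : s ^ 2 = K * ρ * b := Real.sq_sqrt hKρb.le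
  have hs : 0 < s := Real.sqrt_pos.2 hKρb
  have hsb : s < b := by
    refine lt_of_pow_lt_pow_left₀ 2 hb0.le ?_
    nlinarith
  have hs1b : (1 - ρ) * b < s := by
    refine lt_of_pow_lt_pow_left₀ 2 hs.le ?_
    nlinarith
  have hs3 : s ^ 3 = K * ρ * b * s := by linear_combination s * hs2
  have h2 : 0 ≤ K * ρ + b - 2 * s := by nlinarith [sq_nonneg (s - b)]
  have hcand_le : (s - (1 - ρ) * b) / ρ ≤ b := by
    rw [div_le_iff₀ hρ0]
    nlinarith
  have hDc : (1 - ρ) * b + ρ * ((s - (1 - ρ) * b) / ρ) = s := by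
    field_simp
    ring
  unfold fK
  rw [if_pos hcand_le, hDc]
  split_ifs with h
  · -- a ≤ b
    have hD : 0 < (1 - ρ) * b + ρ * a := by nlinarith
    rw [div_add_div _ _ hs.ne' hρ0.ne', div_add' _ _ _ hD.ne',
      div_le_div_iff₀ (by positivity) hD]
    nlinarith [mul_nonneg hs.le (sq_nonneg (s - ((1 - ρ) * b + ρ * a))), hs2, hs3,
      mul_pos hs hD]
  · -- a > b
    have ha0 : 0 < a := lt_trans hb0 (not_le.1 h)
    rw [div_add_div _ _ hs.ne' hρ0.ne', div_add' _ _ _ ha0.ne',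
      div_le_div_iff₀ (by positivity) ha0]
    nlinarith [mul_nonneg (mul_nonneg (mul_nonneg h1ρ.le ha) hs.le) h2,
      mul_nonneg (mul_nonneg hρ0.le hs.le) (sq_nonneg (a - s)), hs2, hs3]

/-- If `ρ ≤ 1/2` and `r b` is, for each `b > 0`, the unique minimizer of
`a ↦ c(a;b)` over `[0,∞)`, then `r` is monotone increasing (FTC) on
`(0, b^e)` and monotone decreasing (ATC) on `(b^e, b^e/(1-ρ)²)`. -/
theorem best_response_FTC_ATC_low_rho (ρ W0 C : ℝ) (hρ0 : 0 < ρ) (hρ1 : ρ < 1)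
    (hW0 : 0 < W0) (hC : 0 < C) (hρhalf : ρ ≤ 1 / 2) (r : ℝ → ℝ)
    (hr : ∀ b : ℝ, 0 < b →
      0 ≤ r b ∧ (∀ a : ℝ, 0 ≤ a → costC ρ W0 C b (r b) ≤ costC ρ W0 C b a) ∧
      (∀ a : ℝ, 0 ≤ a → (∀ a' : ℝ, 0 ≤ a' → costC ρ W0 C b a ≤ costC ρ W0 C b a') →
        a = r b)) :
    MonotoneOn r (Set.Ioo 0 (eqBid ρ W0 C)) ∧
    AntitoneOn r (Set.Ioo (eqBid ρ W0 C) (eqBid ρ W0 C / (1 - ρ) ^ 2)) := by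
  have h1ρ : (0:ℝ) < 1 - ρ := by linarith
  set K : ℝ := C * W0 / (1 - ρ) with hK_def
  have hK : 0 < K := by positivity
  have hE : eqBid ρ W0 C = K * ρ := by unfold eqBid; rw [hK_def]; ring
  have hKρ : 0 < K * ρ := by positivity
  -- r on (0, b^e)
  have rA : ∀ b ∈ Set.Ioo (0:ℝ) (eqBid ρ W0 C), r b = Real.sqrt (K * ρ * b) := by
    intro b hb
    rw [hE] at hb
    obtain ⟨_, _, huniq⟩ := hr b hb.1
    exact (huniq _ (Real.sqrt_nonneg _) (fun a' ha' => by
      rw [costC_eq, costC_eq]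
      exact minA ρ K b hρ0 hρ1 hK hb.1 hb.2 a' ha')).symm
  have rB : ∀ b ∈ Set.Ioo (eqBid ρ W0 C) (eqBid ρ W0 C / (1 - ρ) ^ 2),
      r b = (Real.sqrt (K * ρ * b) - (1 - ρ) * b) / ρ := by
    intro b hb
    rw [hE] at hb
    have hb1 : K * ρ < b := hb.1
    have hb2 : (1 - ρ) ^ 2 * b < K * ρ := by
      have := (lt_div_iff₀ (by positivity : (0:ℝ) < (1 - ρ) ^ 2)).1 hb.2
      linarith
    have hb0 : 0 < b := lt_trans hKρ hb1
    have hcand : 0 ≤ (Real.sqrt (K * ρ * b) - (1 - ρ) * b) / ρ := by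
      apply div_nonneg _ hρ0.le
      have : (1 - ρ) * b < Real.sqrt (K * ρ * b) := by
        rw [show (1 - ρ) * b = Real.sqrt (((1 - ρ) * b) ^ 2) from
          (Real.sqrt_sq (by positivity)).symm]
        apply Real.sqrt_lt_sqrt (by positivity)
        nlinarith
      linarith
    obtain ⟨_, _, huniq⟩ := hr b hb0
    exact (huniq _ hcand (fun a' ha' => by
      rw [costC_eq, costC_eq]
      exact minB ρ K b hρ0 hρ1 hK hb1 hb2 a' ha')).symm
  constructor
  · intro x hx y hy hxy
    rw [rA x hx, rA y hy]
    apply Real.sqrt_le_sqrt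
    nlinarith [hx.1, hy.1]
  · intro x hx y hy hxy
    rw [rB x hx, rB y hy]
    rw [hE] at hx hy
    have hx0 : 0 < x := lt_trans hKρ hx.1
    have hy0 : 0 < y := lt_trans hKρ hy.1
    rw [Real.sqrt_mul hKρ.le x, Real.sqrt_mul hKρ.le y]
    set e := Real.sqrt (K * ρ) with he_def
    set u := Real.sqrt x with hu_def
    set v := Real.sqrt y with hv_def
    have hu2 : u ^ 2 = x := Real.sq_sqrt hx0.le
    have hv2 : v ^ 2 = y := Real.sq_sqrt hy0.le
    have heu : e < u := Real.sqrt_lt_sqrt hKρ.le hx.1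
    have huv : u ≤ v := Real.sqrt_le_sqrt hxy
    have he0 : 0 ≤ e := Real.sqrt_nonneg _
    have hfac : 0 ≤ (1 - ρ) * (u + v) - e := by nlinarith
    have hmain : e * v - (1 - ρ) * y ≤ e * u - (1 - ρ) * x := by
      nlinarith [mul_nonneg (sub_nonneg.2 huv) hfac, hu2, hv2]
    exact div_le_div_of_nonneg_right hmain hρ0.le
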